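/- Let p be a prime, k a field of characteristic p, and A = k[x]/(x^p); write x̄ for the class of x in A. Let (X^g)_{g∈G} be a grading of A by a group G, and suppose the component of trivial degree X^1 contains an element of the form x̄ + u with u in the ideal generated by x̄². Then x̄ ∈ X^1; in fact the grading restricted to its support is trivial: X^1 = A and X^g = 0 for all g ≠ 1. -/
import Mathlib


set_option synthInstance.maxHeartbeats 400000
set_option maxHeartbeats 1000000

/-- Abstract core of the argument: `A` is a commutative `k`-algebra, `ξ` a nonzero
element with `ξ ^ p = 0` such that every element of `A` is a constant plus a multiple of
`ξ` (the constant being computed by an algebra map `ε : A →ₐ[k] k`).  If a grading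
`(X g)` of `A` by a group `G` has `ξ + u ∈ X 1` with `u` a multiple of `ξ ^ 2`, then the
grading is trivial. -/
theorem aux_grading_trivial {p : ℕ} (hp : p.Prime) {k : Type*} [Field k] (hchar : CharP k p)
    {A : Type*} [CommRing A] [Algebra k A]
    {G : Type*} [Group G] (X : G → Submodule k A)
    (hind : iSupIndep X) (hsup : (⨆ g, X g) = ⊤)
    (hmul : ∀ g h, X g * X h ≤ X (g * h))
    (ξ : A) (hξne : ξ ≠ 0) (hξp : ξ ^ p = 0)
    (ε : A →ₐ[k] k)
    (hdec : ∀ a : A, ∃ b : A, a = ε a • 1 + ξ * b)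
    (u : A) (hu : ∃ w, u = ξ ^ 2 * w)
    (hxu : ξ + u ∈ X 1) :
    ξ ∈ X 1 ∧ X 1 = ⊤ ∧ ∀ g : G, g ≠ 1 → X g = ⊥ := by
  classical
  haveI : Fact p.Prime := ⟨hp⟩
  haveI : Nontrivial A := nontrivial_of_ne ξ 0 hξne
  haveI : CharP A p := charP_of_injective_algebraMap (algebraMap k A).injective p
  have hp1 : 1 ≤ p := hp.one_lt.le.trans' (by norm_num)
  obtain ⟨w, hw⟩ := hu
  -- powers `ξ^m` for `m ≥ p` vanish
  have hbig : ∀ m, p ≤ m → ξ ^ m = 0 := by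
    intro m hm
    have : ξ ^ m = ξ ^ p * ξ ^ (m - p) := by rw [← pow_add]; congr 1; omega
    rw [this, hξp, zero_mul]
  -- multiples of ξ^m lie in X 1 provided all powers ξ^j, j ≥ m, do
  have hMmul : ∀ d m, p ≤ m + d → (∀ j, m ≤ j → ξ ^ j ∈ X 1) → ∀ b, ξ ^ m * b ∈ X 1 := by
    intro d
    induction d with
    | zero =>
        intro m hpm _ b
        rw [hbig m (by omega), zero_mul]
        exact (X 1).zero_mem
    | succ d ih =>
        intro m hpm hm b
        obtain ⟨b', hb'⟩ := hdec b
        have : ξ ^ m * b = (ε b) • ξ ^ m + ξ ^ (m + 1) * b' := by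
          conv_lhs => rw [hb']
          rw [mul_add, mul_smul_comm, mul_one, ← mul_assoc, ← pow_succ]
        rw [this]
        exact (X 1).add_mem ((X 1).smul_mem _ (hm m le_rfl))
          (ih (m + 1) (by omega) (fun j hj => hm j (by omega)) b')
  -- powers of `ξ + u` lie in X 1
  have ht : ∀ n, 1 ≤ n → (ξ + u) ^ n ∈ X 1 := by
    intro n hn
    induction n with
    | zero => omega
    | succ m ih =>
        rcases Nat.eq_or_lt_of_le hn with h | h
        · simpa [← h] using hxu
        · have := hmul 1 1 (Submodule.mul_mem_mul (ih (by omega)) hxu)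
          simpa [pow_succ] using this
  -- expansion of powers of `ξ + u`
  have hexp : ∀ n, 1 ≤ n → ∃ s, (ξ + u) ^ n = ξ ^ n + ξ ^ (n + 1) * s := by
    intro n hn
    induction n with
    | zero => omega
    | succ m ih =>
        rcases Nat.eq_or_lt_of_le hn with h | h
        · refine ⟨w, ?_⟩
          rw [← h, pow_one, pow_one, hw]
        · obtain ⟨s, hs⟩ := ih (by omega)
          refine ⟨w + s + ξ * s * w, ?_⟩
          rw [pow_succ, hs, hw]
          ring
  -- all positive powers of ξ lie in X 1
  have key : ∀ d m, 1 ≤ m → p ≤ m + d → ξ ^ m ∈ X 1 := by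
    intro d
    induction d with
    | zero =>
        intro m hm hpm
        rw [hbig m (by omega)]
        exact (X 1).zero_mem
    | succ d ih =>
        intro m hm hpm
        by_cases hcase : p ≤ m
        · rw [hbig m hcase]; exact (X 1).zero_mem
        · obtain ⟨s, hs⟩ := hexp m hm
          have htail : ξ ^ (m + 1) * s ∈ X 1 :=
            hMmul p (m + 1) (by omega) (fun j hj => ih j (by omega) (by omega)) s
          have : ξ ^ m = (ξ + u) ^ m - ξ ^ (m + 1) * s := by rw [hs]; ring
          rw [this]
          exact (X 1).sub_mem (ht m hm) htail
  have hξX1 : ξ ∈ X 1 := by simpa using key p 1 le_rfl (by omega)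
  have hmemX1 : ∀ b : A, ξ * b ∈ X 1 := by
    intro b
    have := hMmul p 1 (by omega) (fun j hj => key p j hj (by omega)) b
    simpa using this
  -- powers stay in components
  have hpowmem : ∀ (g : G) (a : A), a ∈ X g → ∀ n, 1 ≤ n → a ^ n ∈ X (g ^ n) := by
    intro g a hag n hn
    induction n with
    | zero => omega
    | succ m ih =>
        rcases Nat.eq_or_lt_of_le hn with h | h
        · simpa [← h] using hag
        · have := hmul (g ^ m) g (Submodule.mul_mem_mul (ih (by omega)) hag)
          simpa [pow_succ] using this
  -- 1 ∈ X 1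
  have hone : (1 : A) ∈ X 1 := by
    have h1top : (1 : A) ∈ ⨆ g, X g := by rw [hsup]; exact trivial
    obtain ⟨v, hv, hvsum⟩ := (Submodule.mem_iSup_iff_exists_finsupp X 1).mp h1top
    have hexistg : ∃ g, ε (v g) ≠ 0 := by
      by_contra hcon
      push_neg at hcon
      have : ε 1 = 0 := by
        rw [← hvsum, Finsupp.sum, map_sum]
        exact Finset.sum_eq_zero fun g _ => hcon g
      simp at this
    obtain ⟨g, hg⟩ := hexistg
    obtain ⟨b, hb⟩ := hdec (v g)
    have hap : (v g) ^ p = (ε (v g) ^ p) • 1 := by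
      have hnp : (ξ * b) ^ p = 0 := by rw [mul_pow, hξp, zero_mul]
      conv_lhs => rw [hb]
      rw [add_pow_char, hnp, add_zero, smul_pow, one_pow]
    have haXgp : (v g) ^ p ∈ X (g ^ p) := hpowmem g (v g) (hv g) p hp1
    have h1gp : (1 : A) ∈ X (g ^ p) := by
      have hcp : ε (v g) ^ p ≠ 0 := pow_ne_zero p hg
      have := (X (g ^ p)).smul_mem (ε (v g) ^ p)⁻¹ (hap ▸ haXgp)
      rwa [smul_smul, inv_mul_cancel₀ hcp, one_smul] at this
    by_cases hgp : g ^ p = 1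
    · rwa [hgp] at h1gp
    · exfalso
      have hξgp : ξ ∈ X (g ^ p) := by
        have := hmul (g ^ p) 1 (Submodule.mul_mem_mul h1gp hξX1)
        simpa using this
      have hdisj : Disjoint (X 1) (X (g ^ p)) :=
        (hind 1).mono_right (le_iSup₂ (f := fun j (_ : j ≠ 1) => X j) (g ^ p) hgp)
      have hξ0 : ξ = 0 := by
        have := hdisj.le_bot (Submodule.mem_inf.mpr ⟨hξX1, hξgp⟩)
        simpa using this
      exact hξne hξ0
  -- X 1 = ⊤
  have hX1top : X 1 = ⊤ := by
    rw [eq_top_iff]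
    intro a _
    obtain ⟨b, hb⟩ := hdec a
    rw [hb]
    exact (X 1).add_mem ((X 1).smul_mem _ hone) (hmemX1 b)
  refine ⟨hξX1, hX1top, fun g hg => ?_⟩
  have hdisj : Disjoint (X 1) (X g) :=
    (hind 1).mono_right (le_iSup₂ (f := fun j (_ : j ≠ 1) => X j) g hg)
  rw [eq_bot_iff]
  intro a ha
  exact hdisj.le_bot (Submodule.mem_inf.mpr ⟨hX1top ▸ Submodule.mem_top, ha⟩)

/-- Let `p` be a prime, `k` a field of characteristic `p`, `A = k[x]/(x^p)` and `x̄` the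
class of `x`.  If a grading `(X^g)_{g∈G}` of `A` is such that the trivial component `X^1`
contains an element `x̄ + u` with `u` in the ideal generated by `x̄²`, then `x̄ ∈ X^1`; in
fact `X^1 = A` and `X^g = 0` for all `g ≠ 1`. -/
theorem stmt8 (p : ℕ) (hp : p.Prime) (k : Type*) [Field k] (hchar : CharP k p)
    (G : Type*) [Group G]
    (X : G → Submodule k (Polynomial k ⧸ (Ideal.span {Polynomial.X ^ p} : Ideal (Polynomial k))))
    (hind : iSupIndep X) (hsup : (⨆ g, X g) = ⊤)
    (hmul : ∀ g h, X g * X h ≤ X (g * h))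
    (u : Polynomial k ⧸ (Ideal.span {Polynomial.X ^ p} : Ideal (Polynomial k)))
    (hu : u ∈ Ideal.span
      {(Ideal.Quotient.mk (Ideal.span {Polynomial.X ^ p}) Polynomial.X) ^ 2})
    (hxu : Ideal.Quotient.mk (Ideal.span {Polynomial.X ^ p}) Polynomial.X + u ∈ X 1) :
    Ideal.Quotient.mk (Ideal.span {Polynomial.X ^ p}) Polynomial.X ∈ X 1 ∧
    X 1 = ⊤ ∧
    (∀ g : G, g ≠ 1 → X g = ⊥) := by
  have hp1 : p ≠ 0 := hp.ne_zero
  have hp2 : 2 ≤ p := hp.two_le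
  -- ξ ≠ 0
  have hξne : Ideal.Quotient.mk (Ideal.span {Polynomial.X ^ p}) (Polynomial.X : Polynomial k) ≠ 0 := by
    intro h0
    rw [Ideal.Quotient.eq_zero_iff_mem] at h0
    obtain ⟨b, hb⟩ := Ideal.mem_span_singleton.mp h0
    have hdvd : (Polynomial.X : Polynomial k) ^ p ∣ Polynomial.X := ⟨b, hb⟩
    have := Polynomial.natDegree_le_of_dvd hdvd Polynomial.X_ne_zero
    simp [Polynomial.natDegree_X_pow, Polynomial.natDegree_X] at this
    omega
  -- ξ ^ p = 0
  have hξp : (Ideal.Quotient.mk (Ideal.span {Polynomial.X ^ p}) (Polynomial.X : Polynomial k)) ^ p = 0 := by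
    rw [← map_pow, Ideal.Quotient.eq_zero_iff_mem]
    exact Ideal.subset_span rfl
  -- evaluation at 0
  obtain ⟨ε, hε⟩ : ∃ ε : (Polynomial k ⧸ (Ideal.span {Polynomial.X ^ p} :
        Ideal (Polynomial k))) →ₐ[k] k,
      ∀ f : Polynomial k, ε (Ideal.Quotient.mk (Ideal.span {Polynomial.X ^ p}) f) = f.eval 0 := by
    refine ⟨Ideal.Quotient.liftₐ (Ideal.span {Polynomial.X ^ p}) (Polynomial.aeval (0 : k)) ?_,
      fun f => ?_⟩
    · intro a ha
      obtain ⟨b, rfl⟩ := Ideal.mem_span_singleton.mp ha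
      simp [zero_pow hp1]
    · simp [Ideal.Quotient.liftₐ_apply]
  -- decomposition
  have hdec : ∀ a : Polynomial k ⧸ (Ideal.span {Polynomial.X ^ p} : Ideal (Polynomial k)),
      ∃ b, a = ε a • 1 +
        Ideal.Quotient.mk (Ideal.span {Polynomial.X ^ p}) Polynomial.X * b := by
    intro a
    obtain ⟨f, rfl⟩ := Ideal.Quotient.mk_surjective a
    have h0 : (f - Polynomial.C (f.eval 0)).coeff 0 = 0 := by
      simp [Polynomial.coeff_sub, Polynomial.coeff_zero_eq_eval_zero]
    obtain ⟨f₁, hf₁⟩ := Polynomial.X_dvd_iff.mpr h0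
    refine ⟨Ideal.Quotient.mk _ f₁, ?_⟩
    have hfeq : f = Polynomial.C (f.eval 0) + Polynomial.X * f₁ := by
      rw [← hf₁]; ring
    calc Ideal.Quotient.mk (Ideal.span {Polynomial.X ^ p}) f
        = Ideal.Quotient.mk (Ideal.span {Polynomial.X ^ p})
            (Polynomial.C (f.eval 0) + Polynomial.X * f₁) := by rw [← hfeq]
      _ = _ := by
          have hC : ∀ c : k, Ideal.Quotient.mk (Ideal.span {Polynomial.X ^ p})
              (Polynomial.C c) = c • (1 : Polynomial k ⧸
                (Ideal.span {Polynomial.X ^ p} : Ideal (Polynomial k))) := fun c => by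
            rw [← Polynomial.algebraMap_eq, Ideal.Quotient.mk_algebraMap,
              Algebra.algebraMap_eq_smul_one]
          rw [map_add, map_mul, hε, hC]
  -- u is a multiple of ξ²
  obtain ⟨w, hw⟩ := Ideal.mem_span_singleton.mp hu
  exact aux_grading_trivial hp hchar X hind hsup hmul _ hξne hξp ε hdec u ⟨w, hw⟩ hxu
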